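/- Let V be an n-dimensional complex vector space and x, y ∈ End(V) linear operators such that the commutator [x, y] = x∘y − y∘x is a nilpotent operator of rank at most one (note that since Tr[x,y] = 0, a commutator of rank at most one is automatically nilpotent). Then x and y are simultaneously triangularizable: there exists a complete flag 0 = W_0 ⊆ W_1 ⊆ ⋯ ⊆ W_n = V of linear subspaces with dim W_k = k, x(W_k) ⊆ W_k and y(W_k) ⊆ W_k for every k. Equivalently, there is a basis of V in which the matrices of both x and y are upper triangular. -/

import Mathlib

open Module LinearMap Submodule

universe u

private lemma aux_finrank_comap {V : Type u} [AddCommGroup V] [Module ℂ V]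
    [FiniteDimensional ℂ V] (L : Submodule ℂ V) (p : Submodule ℂ (V ⧸ L)) :
    finrank ℂ (p.comap L.mkQ) = finrank ℂ p + finrank ℂ L := by
  set C := p.comap L.mkQ with hC
  have hL : L ≤ C := by
    intro v hv
    simp only [hC, Submodule.mem_comap, Submodule.mkQ_apply,
      (Submodule.Quotient.mk_eq_zero L).2 hv, Submodule.zero_mem]
  set g : C →ₗ[ℂ] V ⧸ L := L.mkQ ∘ₗ C.subtype with hg
  have hrange : range g = p := by
    rw [hg, LinearMap.range_comp, Submodule.range_subtype]
    exact Submodule.map_comap_eq_of_surjective (Submodule.mkQ_surjective L) p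
  have hker : ker g = L.comap C.subtype := by
    rw [hg, LinearMap.ker_comp, Submodule.ker_mkQ]
  have h1 : finrank ℂ (ker g) = finrank ℂ L := by
    rw [hker]; exact (Submodule.comapSubtypeEquivOfLe hL).finrank_eq
  have := g.finrank_range_add_finrank_ker
  rw [hrange, h1] at this
  omega



private lemma common_eigenvector :
    ∀ (n : ℕ) (V : Type u) [AddCommGroup V] [Module ℂ V] [FiniteDimensional ℂ V],
      finrank ℂ V ≤ n → Nontrivial V → ∀ x y : V →ₗ[ℂ] V,
      finrank ℂ (LinearMap.range (x ∘ₗ y - y ∘ₗ x)) ≤ 1 →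
      ∃ v : V, v ≠ 0 ∧ x v ∈ (ℂ ∙ v) ∧ y v ∈ (ℂ ∙ v) := by
  intro n
  induction n with
  | zero =>
    intro V _ _ _ hn hV x y _
    exact absurd hn (by have := Module.finrank_pos (R := ℂ) (M := V); omega)
  | succ n IH =>
    intro V _ _ _ hn hV x y hrk
    set N : V →ₗ[ℂ] V := x ∘ₗ y - y ∘ₗ x with hNdef
    have hNapp : ∀ w : V, N w = x (y w) - y (x w) := fun w => by
      simp [hNdef]
    obtain ⟨μ, hμ⟩ := Module.End.exists_eigenvalue x
    set E := Module.End.eigenspace x μ with hE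
    by_cases hcase : ∀ v ∈ E, N v = 0
    · -- E is y-invariant; take eigenvector of y restricted to E
      have hyE : ∀ v ∈ E, y v ∈ E := by
        intro v hv
        have hv' := hv
        rw [hE, Module.End.mem_eigenspace_iff] at hv' ⊢
        have h0 := hcase v hv
        rw [hNapp] at h0
        have : x (y v) = y (x v) := by linear_combination (norm := module) h0
        rw [this, hv', map_smul]
      obtain ⟨v₀, hv₀⟩ := hμ.exists_hasEigenvector
      haveI : Nontrivial E :=
        nontrivial_of_ne ⟨v₀, hv₀.1⟩ 0 (by simp [Subtype.ext_iff, hv₀.2])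
      set y' : E →ₗ[ℂ] E := y.restrict hyE with hy'
      obtain ⟨ν, hν⟩ := Module.End.exists_eigenvalue y'
      obtain ⟨w, hw⟩ := hν.exists_hasEigenvector
      refine ⟨(w : V), by simpa [Submodule.coe_eq_zero] using hw.2, ?_, ?_⟩
      · have hx : x (w : V) = μ • (w : V) :=
          Module.End.mem_eigenspace_iff.mp w.2
        exact Submodule.mem_span_singleton.mpr ⟨μ, hx.symm⟩
      · have hyw : y' w = ν • w := hw.apply_eq_smul
        have : y (w : V) = ν • (w : V) := by
          have := congrArg (Subtype.val) hyw
          simpa [hy', LinearMap.restrict_apply] using this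
        exact Submodule.mem_span_singleton.mpr ⟨ν, this.symm⟩
    · push_neg at hcase
      obtain ⟨v₁, hv₁E, hv₁⟩ := hcase
      set T : V →ₗ[ℂ] V := x - μ • LinearMap.id with hT
      have hTapp : ∀ w, T w = x w - μ • w := fun w => by simp [hT]
      set R := LinearMap.range T with hR
      have hNv₁ : N v₁ = T (y v₁) := by
        have hx : x v₁ = μ • v₁ := Module.End.mem_eigenspace_iff.mp hv₁E
        rw [hNapp, hTapp, hx, map_smul]
      have hNmemR : N v₁ ∈ R := hNv₁ ▸ LinearMap.mem_range_self T (y v₁)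
      -- range N = span of N v₁, hence contained in R
      have hspan : (ℂ ∙ (N v₁)) = LinearMap.range N := by
        apply Submodule.eq_of_le_of_finrank_le
        · rw [Submodule.span_le, Set.singleton_subset_iff]
          exact LinearMap.mem_range_self N v₁
        · rw [finrank_span_singleton hv₁]
          exact hrk
      have hRN : LinearMap.range N ≤ R := by
        rw [← hspan, Submodule.span_le, Set.singleton_subset_iff]
        exact hNmemR
      -- R is a proper subspace
      have hv₁ne : v₁ ≠ 0 := fun h => hv₁ (by simp [h])
      have hkerT : v₁ ∈ LinearMap.ker T := by
        rw [LinearMap.mem_ker, hTapp]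
        have hx : x v₁ = μ • v₁ := Module.End.mem_eigenspace_iff.mp hv₁E
        rw [hx, sub_self]
      haveI : Nontrivial (LinearMap.ker T) :=
        nontrivial_of_ne ⟨v₁, hkerT⟩ 0 (by simp [Subtype.ext_iff, hv₁ne])
      have hlt : finrank ℂ R < finrank ℂ V := by
        have h1 := T.finrank_range_add_finrank_ker
        rw [← hR] at h1
        have h2 : 0 < finrank ℂ (LinearMap.ker T) := Module.finrank_pos
        omega
      -- invariance of R
      have hxR : ∀ w ∈ R, x w ∈ R := by
        rintro _ ⟨u, rfl⟩
        have : x (T u) = T (x u) := by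
          rw [hTapp, hTapp, map_sub, map_smul]
        rw [this]; exact LinearMap.mem_range_self T (x u)
      have hyR : ∀ w ∈ R, y w ∈ R := by
        rintro _ ⟨u, rfl⟩
        have heq : y (T u) = T (y u) - N u := by
          rw [hTapp, hTapp, hNapp, map_sub, map_smul]; module
        rw [heq]
        exact Submodule.sub_mem R (LinearMap.mem_range_self T (y u))
          (hRN (LinearMap.mem_range_self N u))
      have hNR : ∀ w ∈ R, N w ∈ R := fun w _ => hRN (LinearMap.mem_range_self N w)
      haveI : Nontrivial R := nontrivial_of_ne ⟨N v₁, hNmemR⟩ 0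
        (by simp [Subtype.ext_iff, hv₁])
      -- restriction of commutator
      set x' : R →ₗ[ℂ] R := x.restrict hxR with hx'
      set y' : R →ₗ[ℂ] R := y.restrict hyR with hy'
      have hcomm : x' ∘ₗ y' - y' ∘ₗ x' = N.restrict hNR := by
        ext w
        simp only [hx', hy', LinearMap.sub_apply, LinearMap.comp_apply,
          Submodule.coe_sub, LinearMap.restrict_coe_apply, hNapp]
      have hrk' : finrank ℂ (LinearMap.range (x' ∘ₗ y' - y' ∘ₗ x')) ≤ 1 := by
        rw [hcomm]
        have hle : (LinearMap.range (N.restrict hNR)).map R.subtype ≤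
            LinearMap.range N := by
          rintro _ ⟨_, ⟨u, rfl⟩, rfl⟩
          exact ⟨(u : V), (LinearMap.restrict_coe_apply N hNR u).symm⟩
        calc finrank ℂ (LinearMap.range (N.restrict hNR))
            = finrank ℂ ((LinearMap.range (N.restrict hNR)).map R.subtype) :=
              (Submodule.finrank_map_subtype_eq R _).symm
          _ ≤ finrank ℂ (LinearMap.range N) := Submodule.finrank_mono hle
          _ ≤ 1 := hrk
      obtain ⟨w, hw0, hxw, hyw⟩ := IH R (by omega) inferInstance x' y' hrk'
      refine ⟨(w : V), by simpa [Submodule.coe_eq_zero] using hw0, ?_, ?_⟩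
      · obtain ⟨c, hc⟩ := Submodule.mem_span_singleton.mp hxw
        refine Submodule.mem_span_singleton.mpr ⟨c, ?_⟩
        have := congrArg (Subtype.val) hc
        simpa [hx', LinearMap.restrict_apply] using this
      · obtain ⟨c, hc⟩ := Submodule.mem_span_singleton.mp hyw
        refine Submodule.mem_span_singleton.mpr ⟨c, ?_⟩
        have := congrArg (Subtype.val) hc
        simpa [hy', LinearMap.restrict_apply] using this



private lemma flag_aux :
    ∀ (n : ℕ) (V : Type u) [AddCommGroup V] [Module ℂ V] [FiniteDimensional ℂ V],
      finrank ℂ V = n → ∀ x y : V →ₗ[ℂ] V,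
      finrank ℂ (LinearMap.range (x ∘ₗ y - y ∘ₗ x)) ≤ 1 →
      ∃ W : Fin (n + 1) → Submodule ℂ V,
        Monotone W ∧ W 0 = ⊥ ∧ W (Fin.last n) = ⊤ ∧
        (∀ k, finrank ℂ (W k) = (k : ℕ)) ∧
        (∀ k, (W k).map x ≤ W k ∧ (W k).map y ≤ W k) := by
  intro n
  induction n with
  | zero =>
    intro V _ _ _ hn x y _
    haveI : Subsingleton V := Module.finrank_zero_iff.mp hn
    refine ⟨fun _ => ⊥, monotone_const, rfl, Subsingleton.elim _ _, ?_, ?_⟩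
    · intro k
      have hk := k.isLt
      rw [finrank_bot]
      omega
    · intro k
      simp
  | succ n IH =>
    intro V _ _ _ hn x y hrk
    haveI : Nontrivial V := Module.nontrivial_of_finrank_pos (R := ℂ) (by omega)
    obtain ⟨v, hv0, hxv, hyv⟩ :=
      common_eigenvector (n + 1) V (le_of_eq hn) inferInstance x y hrk
    set L : Submodule ℂ V := ℂ ∙ v with hLdef
    have hxL : L ≤ L.comap x := by
      rw [← Submodule.map_le_iff_le_comap, hLdef, Submodule.map_span,
        Set.image_singleton, Submodule.span_le, Set.singleton_subset_iff]
      exact hxv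
    have hyL : L ≤ L.comap y := by
      rw [← Submodule.map_le_iff_le_comap, hLdef, Submodule.map_span,
        Set.image_singleton, Submodule.span_le, Set.singleton_subset_iff]
      exact hyv
    have hLrank : finrank ℂ L = 1 := finrank_span_singleton hv0
    have hQrank : finrank ℂ (V ⧸ L) = n := by
      have := L.finrank_quotient_add_finrank
      omega
    set N : V →ₗ[ℂ] V := x ∘ₗ y - y ∘ₗ x with hNdef
    have hNL : L ≤ L.comap N := by
      intro w hw
      have hx := hxL hw
      have hy := hyL hw
      simp only [Submodule.mem_comap] at hx hy ⊢
      have : N w = x (y w) - y (x w) := by simp [hNdef]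
      rw [this]
      exact Submodule.sub_mem L (hxL hy) (hyL hx)
    set xb := Submodule.mapQ L L x hxL with hxb
    set yb := Submodule.mapQ L L y hyL with hyb
    set Nb := Submodule.mapQ L L N hNL with hNb
    have hbar : xb ∘ₗ yb - yb ∘ₗ xb = Nb := by
      apply Submodule.linearMap_qext
      ext w
      simp [hxb, hyb, hNb, Submodule.mapQ_apply, hNdef]
    have hrkQ : finrank ℂ (LinearMap.range (xb ∘ₗ yb - yb ∘ₗ xb)) ≤ 1 := by
      rw [hbar]
      have h1 : Nb ∘ₗ L.mkQ = L.mkQ ∘ₗ N := by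
        ext w; simp [hNb, Submodule.mapQ_apply]
      have h2 : LinearMap.range Nb = (LinearMap.range N).map L.mkQ := by
        rw [← LinearMap.range_comp, ← h1, LinearMap.range_comp,
          Submodule.range_mkQ, Submodule.map_top]
      rw [h2]
      exact le_trans (Submodule.finrank_map_le _ _) hrk
    obtain ⟨W', hmono', h0', hlast', hrank', hinv'⟩ := IH (V ⧸ L) hQrank xb yb hrkQ
    set W : Fin (n + 2) → Submodule ℂ V :=
      Fin.cases ⊥ (fun i => (W' i).comap L.mkQ) with hW
    have hsucc : ∀ i : Fin (n + 1), W i.succ = (W' i).comap L.mkQ :=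
      fun i => by simp [hW]
    have hW0 : W 0 = ⊥ := by simp [hW]
    refine ⟨W, ?_, hW0, ?_, ?_, ?_⟩
    · rw [Fin.monotone_iff_le_succ]
      intro i
      induction i using Fin.cases with
      | zero =>
        have : (0 : Fin (n + 1)).castSucc = 0 := rfl
        rw [this, hW0]
        exact bot_le
      | succ j =>
        rw [← Fin.succ_castSucc, hsucc, hsucc]
        exact Submodule.comap_mono (hmono' (Fin.castSucc_lt_succ (i := j)).le)
    · rw [← Fin.succ_last, hsucc, hlast', Submodule.comap_top]
    · intro k
      induction k using Fin.cases with
      | zero => rw [hW0, finrank_bot]; rfl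
      | succ i =>
        rw [hsucc, aux_finrank_comap, hrank' i, hLrank, Fin.val_succ]
    · intro k
      induction k using Fin.cases with
      | zero => rw [hW0]; simp
      | succ i =>
        rw [hsucc]
        constructor
        · rintro _ ⟨w, hw, rfl⟩
          have : L.mkQ (x w) = xb (L.mkQ w) := by
            simp [hxb, Submodule.mapQ_apply]
          simp only [Submodule.mem_comap] at hw ⊢
          rw [this]
          exact (hinv' i).1 ⟨L.mkQ w, hw, rfl⟩
        · rintro _ ⟨w, hw, rfl⟩
          have : L.mkQ (y w) = yb (L.mkQ w) := by
            simp [hyb, Submodule.mapQ_apply]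
          simp only [Submodule.mem_comap] at hw ⊢
          rw [this]
          exact (hinv' i).2 ⟨L.mkQ w, hw, rfl⟩

theorem simultaneously_triangularizable_of_rank_one_commutator
    (V : Type*) [AddCommGroup V] [Module ℂ V] [FiniteDimensional ℂ V]
    (x y : V →ₗ[ℂ] V)
    (hnil : IsNilpotent (x ∘ₗ y - y ∘ₗ x))
    (hrk : Module.finrank ℂ (LinearMap.range (x ∘ₗ y - y ∘ₗ x)) ≤ 1) :
    ∃ W : Fin (Module.finrank ℂ V + 1) → Submodule ℂ V,
      Monotone W ∧ W 0 = ⊥ ∧ W (Fin.last (Module.finrank ℂ V)) = ⊤ ∧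
      (∀ k, Module.finrank ℂ (W k) = (k : ℕ)) ∧
      (∀ k, (W k).map x ≤ W k ∧ (W k).map y ≤ W k) :=
  flag_aux (Module.finrank ℂ V) V rfl x y hrk
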